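/- arXiv:1909.05893 — 2 statements merged into one kernel-verified Lean document; each statement's English description precedes it below -/
import Mathlib

section
/- Let F, E, B be topological spaces, let p : E → B be a continuous map carrying the structure of a fiber bundle with fiber F (i.e., every point of B has an open neighborhood U together with a homeomorphism h : p⁻¹(U) → U × F whose first coordinate is p). Then p has the homotopy lifting property with respect to every cube: for every natural number k, every continuous map f̂ : [0,1]^k → E, and every continuous map H : [0,1]^k × [0,1] → B with H(x, 0) = p(f̂(x)) for all x, there exists a continuous map Ĥ : [0,1]^k × [0,1] → E with Ĥ(x, 0) = f̂(x) and p(Ĥ(x, t)) = H(x, t) for all x and t. -/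
open Set Function

noncomputable section

namespace FBHLP

notation "II" => unitInterval

lemma continuousOn_union_closed {α β : Type*} [TopologicalSpace α] [TopologicalSpace β]
    {f : α → β} {s t : Set α} (hs : IsClosed s) (ht : IsClosed t)
    (hfs : ContinuousOn f s) (hft : ContinuousOn f t) : ContinuousOn f (s ∪ t) := by
  intro x hx
  rcases hx with hxs | hxt
  · by_cases hxt : x ∈ t
    · exact (hfs x hxs).union (hft x hxt)
    · exact (hfs x hxs).union
        (continuousWithinAt_of_notMem_closure (by rwa [ht.closure_eq]))
  · by_cases hxs : x ∈ s
    · exact (hfs x hxs).union (hft x hxt)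
    · exact (continuousWithinAt_of_notMem_closure (by rwa [hs.closure_eq])).union
        (hft x hxt)

variable {k : ℕ}

/-- A closed box in the cube `I^k × I`. -/
def cube (l : Fin k → ℝ) (t₁ δ : ℝ) : Set ((Fin k → II) × II) :=
  {z | (∀ i, l i ≤ (z.1 i : ℝ) ∧ (z.1 i : ℝ) ≤ l i + δ) ∧ t₁ ≤ (z.2 : ℝ) ∧ (z.2 : ℝ) ≤ t₁ + δ}

/-- The part of the boundary where the lift is already prescribed. -/
def corner (l : Fin k → ℝ) (t₁ δ : ℝ) (S : Finset (Fin k)) : Set ((Fin k → II) × II) :=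
  cube l t₁ δ ∩ {z | (z.2 : ℝ) = t₁ ∨ ∃ i ∈ S, (z.1 i : ℝ) = l i}

lemma continuous_coord1 (i : Fin k) : Continuous fun z : (Fin k → II) × II => (z.1 i : ℝ) :=
  continuous_subtype_val.comp ((continuous_apply i).comp continuous_fst)

lemma continuous_coord2 : Continuous fun z : (Fin k → II) × II => (z.2 : ℝ) :=
  continuous_subtype_val.comp continuous_snd

lemma isClosed_cube (l : Fin k → ℝ) (t₁ δ : ℝ) : IsClosed (cube l t₁ δ) := by
  have : cube l t₁ δ =
      (⋂ i, ({z | l i ≤ (z.1 i : ℝ)} ∩ {z | (z.1 i : ℝ) ≤ l i + δ})) ∩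
        ({z | t₁ ≤ (z.2 : ℝ)} ∩ {z | (z.2 : ℝ) ≤ t₁ + δ}) := by
    ext z
    simp only [cube, mem_setOf_eq, mem_inter_iff, mem_iInter, forall_and]
  rw [this]
  exact ((isClosed_iInter fun i =>
      ((isClosed_le continuous_const (continuous_coord1 i)).inter
        (isClosed_le (continuous_coord1 i) continuous_const)))).inter
    ((isClosed_le continuous_const continuous_coord2).inter
      (isClosed_le continuous_coord2 continuous_const))

lemma isClosed_corner (l : Fin k → ℝ) (t₁ δ : ℝ) (S : Finset (Fin k)) :
    IsClosed (corner l t₁ δ S) := by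
  refine (isClosed_cube l t₁ δ).inter ?_
  have : {z : (Fin k → II) × II | (z.2 : ℝ) = t₁ ∨ ∃ i ∈ S, (z.1 i : ℝ) = l i} =
      {z | (z.2 : ℝ) = t₁} ∪ ⋃ i ∈ S, {z | (z.1 i : ℝ) = l i} := by
    ext z; simp [mem_setOf_eq]
  rw [this]
  exact (isClosed_eq continuous_coord2 continuous_const).union
    (isClosed_biUnion_finset fun i _ => isClosed_eq (continuous_coord1 i) continuous_const)


section Ext
variable {E B F : Type*} [TopologicalSpace E] [TopologicalSpace B] [TopologicalSpace F]

lemma key_ineq {δ a m0 : ℝ} (hδ : 0 < δ) (h0 : 0 ≤ m0) (h1 : m0 ≤ a) (h2 : a ≤ δ) :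
    0 ≤ 2*δ*(a - m0)/(2*δ - m0) ∧ 2*δ*(a - m0)/(2*δ - m0) ≤ δ := by
  have hD : 0 < 2*δ - m0 := by nlinarith
  constructor
  · apply div_nonneg _ hD.le; nlinarith
  · rw [div_le_iff₀ hD]; nlinarith

lemma ext_lemma [Nonempty E] [Nonempty F]
    (p : E → B)
    (H : (Fin k → II) × II → B) (hH : Continuous H)
    (U : Set B) (h : (p ⁻¹' U) ≃ₜ (U × F)) (hh : ∀ x : p ⁻¹' U, ((h x).1 : B) = p x)
    (l : Fin k → ℝ) (t₁ δ : ℝ) (hδ : 0 < δ)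
    (hl0 : ∀ i, 0 ≤ l i) (hl1 : ∀ i, l i + δ ≤ 1) (ht0 : 0 ≤ t₁) (ht1 : t₁ + δ ≤ 1)
    (S : Finset (Fin k))
    (K : Set ((Fin k → II) × II)) (hK : IsClosed K)
    (hKQ : K ∩ cube l t₁ δ ⊆ corner l t₁ δ S) (hcK : corner l t₁ δ S ⊆ K)
    (hHQ : ∀ z ∈ cube l t₁ δ, H z ∈ U)
    (g : (Fin k → II) × II → E) (hg : ContinuousOn g K) (hgP : ∀ z ∈ K, p (g z) = H z) :
    ∃ g' : (Fin k → II) × II → E, ContinuousOn g' (K ∪ cube l t₁ δ) ∧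
      (∀ z ∈ K ∪ cube l t₁ δ, p (g' z) = H z) ∧ ∀ z ∈ K, g' z = g z := by
  classical
  set Q := cube l t₁ δ with hQdef
  set C := corner l t₁ δ S with hCdef
  have hQclosed : IsClosed Q := isClosed_cube l t₁ δ
  have hCsubQ : C ⊆ Q := inter_subset_left
  -- the minimum "distance to the prescribed corner" function
  set m : (Fin k → II) × II → ℝ := fun z =>
    if hS : S.Nonempty then min ((z.2 : ℝ) - t₁) (S.inf' hS fun i => (z.1 i : ℝ) - l i)
    else (z.2 : ℝ) - t₁ with hmdef
  have hm_cont : Continuous m := by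
    by_cases hS : S.Nonempty
    · simp only [hmdef, dif_pos hS]
      exact (continuous_coord2.sub continuous_const).min
        (Continuous.finset_inf'_apply hS fun i _ => (continuous_coord1 i).sub continuous_const)
    · simp only [hmdef, dif_neg hS]
      exact continuous_coord2.sub continuous_const
  have hm_le_t : ∀ z, m z ≤ (z.2 : ℝ) - t₁ := by
    intro z
    by_cases hS : S.Nonempty
    · simp only [hmdef, dif_pos hS]; exact min_le_left _ _
    · simp only [hmdef, dif_neg hS]; exact le_refl _
  have hm_le_x : ∀ z, ∀ i ∈ S, m z ≤ (z.1 i : ℝ) - l i := by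
    intro z i hi
    have hS : S.Nonempty := ⟨i, hi⟩
    simp only [hmdef, dif_pos hS]
    exact (min_le_right _ _).trans (Finset.inf'_le _ hi)
  have hm_nonneg : ∀ z ∈ Q, 0 ≤ m z := by
    intro z hz
    by_cases hS : S.Nonempty
    · simp only [hmdef, dif_pos hS]
      refine le_min (by linarith [hz.2.1]) (Finset.le_inf' _ _ fun i _ => ?_)
      linarith [(hz.1 i).1]
    · simp only [hmdef, dif_neg hS]; linarith [hz.2.1]
  have hm_eq : ∀ z, m z = (z.2 : ℝ) - t₁ ∨ ∃ i ∈ S, m z = (z.1 i : ℝ) - l i := by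
    intro z
    by_cases hS : S.Nonempty
    · simp only [hmdef, dif_pos hS]
      rcases min_cases ((z.2 : ℝ) - t₁) (S.inf' hS fun i => (z.1 i : ℝ) - l i) with
        ⟨heq, _⟩ | ⟨heq, _⟩
      · exact Or.inl heq
      · obtain ⟨i, hi, hieq⟩ := Finset.exists_mem_eq_inf' hS fun i => (z.1 i : ℝ) - l i
        exact Or.inr ⟨i, hi, heq.trans hieq⟩
    · exact Or.inl (by simp only [hmdef, dif_neg hS])
  have hm_C : ∀ z ∈ C, m z = 0 := by
    intro z hz
    refine le_antisymm ?_ (hm_nonneg z (hCsubQ hz))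
    rcases hz.2 with ht | ⟨i, hi, hx⟩
    · have := hm_le_t z; linarith
    · have := hm_le_x z i hi; linarith
  -- the clamped version and the retraction
  set μ : (Fin k → II) × II → ℝ := fun z => max 0 (min δ (m z)) with hμdef
  have hμ_cont : Continuous μ := continuous_const.max (continuous_const.min hm_cont)
  have hμ_nonneg : ∀ z, 0 ≤ μ z := fun z => le_max_left _ _
  have hμ_le : ∀ z, μ z ≤ δ := fun z => max_le hδ.le (min_le_left _ _)
  have hμ_eq : ∀ z ∈ Q, μ z = m z := by
    intro z hz
    have h1 : m z ≤ δ := by have := hm_le_t z; have := hz.2.2; linarith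
    rw [hμdef]
    simp only [min_eq_right h1, max_eq_right (hm_nonneg z hz)]
  set D : (Fin k → II) × II → ℝ := fun z => 2*δ - μ z with hDdef
  have hD_pos : ∀ z, 0 < D z := by intro z; have := hμ_le z; simp only [hDdef]; linarith
  have hD_cont : Continuous D := continuous_const.sub hμ_cont
  set rt : (Fin k → II) × II → ℝ :=
    fun z => t₁ + 2*δ*((z.2 : ℝ) - t₁ - μ z)/(D z) with hrtdef
  set rx : (Fin k → II) × II → Fin k → ℝ :=
    fun z i => if i ∈ S then l i + 2*δ*((z.1 i : ℝ) - l i - μ z)/(D z) else (z.1 i : ℝ)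
    with hrxdef
  have hrt_cont : Continuous rt := continuous_const.add
    (((continuous_const.mul ((continuous_coord2.sub continuous_const).sub hμ_cont))).div
      hD_cont fun z => (hD_pos z).ne')
  have hrx_cont : ∀ i, Continuous fun z => rx z i := by
    intro i
    by_cases hi : i ∈ S
    · simp only [hrxdef, if_pos hi]
      exact continuous_const.add
        (((continuous_const.mul (((continuous_coord1 i).sub continuous_const).sub hμ_cont))).div
          hD_cont fun z => (hD_pos z).ne')
    · simp only [hrxdef, if_neg hi]; exact continuous_coord1 i
  set r : (Fin k → II) × II → (Fin k → II) × II := fun z =>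
    (fun i => projIcc (0:ℝ) 1 zero_le_one (rx z i), projIcc (0:ℝ) 1 zero_le_one (rt z))
    with hrdef
  have hr_cont : Continuous r := by
    refine Continuous.prodMk (continuous_pi fun i => ?_) ?_
    · exact continuous_projIcc.comp (hrx_cont i)
    · exact continuous_projIcc.comp hrt_cont
  have hrt_mem : ∀ z ∈ Q, t₁ ≤ rt z ∧ rt z ≤ t₁ + δ := by
    intro z hz
    have h1 : μ z ≤ (z.2 : ℝ) - t₁ := (hμ_eq z hz).le.trans (hm_le_t z)
    have h2 : (z.2 : ℝ) - t₁ ≤ δ := by linarith [hz.2.2]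
    obtain ⟨ha, hb⟩ := key_ineq hδ (hμ_nonneg z) h1 h2
    constructor <;> simp only [hrtdef, hDdef] <;> [linarith; linarith]
  have hrx_mem : ∀ z ∈ Q, ∀ i, l i ≤ rx z i ∧ rx z i ≤ l i + δ := by
    intro z hz i
    by_cases hi : i ∈ S
    · have h1 : μ z ≤ (z.1 i : ℝ) - l i := (hμ_eq z hz).le.trans (hm_le_x z i hi)
      have h2 : (z.1 i : ℝ) - l i ≤ δ := by linarith [(hz.1 i).2]
      obtain ⟨ha, hb⟩ := key_ineq hδ (hμ_nonneg z) h1 h2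
      simp only [hrxdef, if_pos hi, hDdef]
      constructor <;> linarith
    · simp only [hrxdef, if_neg hi]
      exact (hz.1 i)
  have hrt_unit : ∀ z ∈ Q, rt z ∈ Icc (0:ℝ) 1 := fun z hz =>
    ⟨ht0.trans (hrt_mem z hz).1, (hrt_mem z hz).2.trans ht1⟩
  have hrx_unit : ∀ z ∈ Q, ∀ i, rx z i ∈ Icc (0:ℝ) 1 := fun z hz i =>
    ⟨(hl0 i).trans (hrx_mem z hz i).1, (hrx_mem z hz i).2.trans (hl1 i)⟩
  have hr_coe_t : ∀ z ∈ Q, ((r z).2 : ℝ) = rt z := by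
    intro z hz
    simp only [hrdef, projIcc_of_mem zero_le_one (hrt_unit z hz)]
  have hr_coe_x : ∀ z ∈ Q, ∀ i, ((r z).1 i : ℝ) = rx z i := by
    intro z hz i
    simp only [hrdef, projIcc_of_mem zero_le_one (hrx_unit z hz i)]
  have hr_mem_Q : ∀ z ∈ Q, r z ∈ Q := by
    intro z hz
    refine ⟨fun i => ?_, ?_, ?_⟩
    · rw [hr_coe_x z hz i]; exact hrx_mem z hz i
    · rw [hr_coe_t z hz]; exact (hrt_mem z hz).1
    · rw [hr_coe_t z hz]; exact (hrt_mem z hz).2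
  have hr_mem_C : ∀ z ∈ Q, r z ∈ C := by
    intro z hz
    refine ⟨hr_mem_Q z hz, ?_⟩
    rcases hm_eq z with heq | ⟨i, hi, heq⟩
    · left
      rw [hr_coe_t z hz]
      have hμz : μ z = (z.2 : ℝ) - t₁ := (hμ_eq z hz).trans heq
      simp only [hrtdef, hμz]
      have : (z.2 : ℝ) - t₁ - ((z.2 : ℝ) - t₁) = 0 := by ring
      rw [this, mul_zero, zero_div, add_zero]
    · right
      refine ⟨i, hi, ?_⟩
      rw [hr_coe_x z hz i]
      have hμz : μ z = (z.1 i : ℝ) - l i := (hμ_eq z hz).trans heq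
      simp only [hrxdef, if_pos hi, hμz]
      have : (z.1 i : ℝ) - l i - ((z.1 i : ℝ) - l i) = 0 := by ring
      rw [this, mul_zero, zero_div, add_zero]
  have hr_id : ∀ z ∈ C, r z = z := by
    intro z hz
    have hzQ := hCsubQ hz
    have hμ0 : μ z = 0 := by rw [hμ_eq z hzQ, hm_C z hz]
    have hDz : D z = 2*δ := by simp only [hDdef, hμ0, sub_zero]
    have hrtz : rt z = (z.2 : ℝ) := by
      simp only [hrtdef, hμ0, hDz, sub_zero]
      field_simp
      ring
    have hrxz : ∀ i, rx z i = (z.1 i : ℝ) := by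
      intro i
      by_cases hi : i ∈ S
      · simp only [hrxdef, if_pos hi, hμ0, hDz, sub_zero]
        field_simp
        ring
      · simp only [hrxdef, if_neg hi]
    have e1 : (r z).1 = z.1 := by
      funext i
      apply Subtype.ext
      rw [hr_coe_x z hzQ i, hrxz i]
    have e2 : (r z).2 = z.2 := by
      apply Subtype.ext
      rw [hr_coe_t z hzQ, hrtz]
    exact Prod.ext e1 e2
  -- the trivialization as total maps
  set TE : E → F := fun e => if he : e ∈ p ⁻¹' U then (h ⟨e, he⟩).2
    else Classical.arbitrary F with hTEdef
  set TB : B → F → E := fun b y => if hb : b ∈ U then (h.symm (⟨b, hb⟩, y) : E)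
    else Classical.arbitrary E with hTBdef
  have hTE_cont : ContinuousOn TE (p ⁻¹' U) := by
    rw [continuousOn_iff_continuous_restrict]
    have : Set.domRestrict (p ⁻¹' U) TE = fun e => (h e).2 := by
      funext e
      simp only [Set.domRestrict, hTEdef, dif_pos e.2, Subtype.coe_eta]
    rw [this]
    exact continuous_snd.comp h.continuous
  have hTB_cont : ContinuousOn (fun w : B × F => TB w.1 w.2) (U ×ˢ (univ : Set F)) := by
    rw [continuousOn_iff_continuous_restrict]
    have : Set.domRestrict (U ×ˢ (univ : Set F)) (fun w : B × F => TB w.1 w.2)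
        = fun w : ↥(U ×ˢ (univ : Set F)) => ((h.symm (⟨w.val.1, w.2.1⟩, w.val.2)) : E) := by
      funext w
      simp only [Set.domRestrict, hTBdef, dif_pos w.2.1]
    rw [this]
    refine continuous_subtype_val.comp (h.symm.continuous.comp ?_)
    exact ((continuous_fst.comp continuous_subtype_val).subtype_mk _).prodMk
      (continuous_snd.comp continuous_subtype_val)
  set φ : (Fin k → II) × II → E := fun z => TB (H z) (TE (g (r z))) with hφdef
  have hrC_K : ∀ z ∈ Q, r z ∈ K := fun z hz => hcK (hr_mem_C z hz)
  have hgr_mem : ∀ z ∈ Q, g (r z) ∈ p ⁻¹' U := by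
    intro z hz
    rw [mem_preimage, hgP _ (hrC_K z hz)]
    exact hHQ _ (hCsubQ (hr_mem_C z hz))
  have hφ_cont : ContinuousOn φ Q := by
    have c1 : ContinuousOn (fun z => g (r z)) Q :=
      hg.comp hr_cont.continuousOn (fun z hz => hrC_K z hz)
    have c2 : ContinuousOn (fun z => TE (g (r z))) Q :=
      hTE_cont.comp c1 (fun z hz => hgr_mem z hz)
    have c3 : ContinuousOn (fun z => (H z, TE (g (r z)))) Q :=
      hH.continuousOn.prodMk c2
    exact hTB_cont.comp c3 (fun z hz => ⟨hHQ z hz, mem_univ _⟩)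
  have hpφ : ∀ z ∈ Q, p (φ z) = H z := by
    intro z hz
    simp only [hφdef, hTBdef]
    rw [dif_pos (hHQ z hz)]
    have := hh (h.symm (⟨H z, hHQ z hz⟩, TE (g (r z))))
    rw [h.apply_symm_apply] at this
    exact this.symm
  have hφC : ∀ z ∈ C, φ z = g z := by
    intro z hz
    have hzQ := hCsubQ hz
    have hmem : g z ∈ p ⁻¹' U := by
      rw [mem_preimage, hgP z (hcK hz)]
      exact hHQ z hzQ
    simp only [hφdef, hr_id z hz, hTEdef, hTBdef]
    rw [dif_pos hmem, dif_pos (hHQ z hzQ)]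
    have h1 : (⟨H z, hHQ z hzQ⟩ : U) = (h ⟨g z, hmem⟩).1 := by
      apply Subtype.ext
      rw [hh ⟨g z, hmem⟩]
      exact (hgP z (hcK hz)).symm
    rw [h1]
    show ((h.symm (h ⟨g z, hmem⟩)) : E) = g z
    rw [h.symm_apply_apply]
  set g' : (Fin k → II) × II → E := fun z => if z ∈ K then g z else φ z with hg'def
  have hg'K : ∀ z ∈ K, g' z = g z := fun z hz => if_pos hz
  have hg'Q : ∀ z ∈ Q, g' z = φ z := by
    intro z hz
    by_cases hzK : z ∈ K
    · rw [hg'def]; simp only [if_pos hzK]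
      exact (hφC z (hKQ ⟨hzK, hz⟩)).symm
    · rw [hg'def]; simp only [if_neg hzK]
  refine ⟨g', ?_, ?_, hg'K⟩
  · exact continuousOn_union_closed hK hQclosed (hg.congr hg'K) (hφ_cont.congr hg'Q)
  · intro z hz
    rcases hz with hzK | hzQ
    · rw [hg'K z hzK]; exact hgP z hzK
    · rw [hg'Q z hzQ]; exact hpφ z hzQ

end Ext
end FBHLP


set_option maxHeartbeats 2000000 in
open Set Function FBHLP in
/-- **Fiber bundles have the homotopy lifting property with respect to cubes.**
If `p : E → B` is continuous and every point of `B` has an open neighborhood `U` admitting a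
homeomorphism `p⁻¹(U) ≃ₜ U × F` whose first coordinate is `p` (a local trivialization), then for
every `k`, every continuous `f : [0,1]^k → E`, and every continuous homotopy
`H : [0,1]^k × [0,1] → B` with `H(x,0) = p (f x)`, there is a continuous lift
`Ĥ : [0,1]^k × [0,1] → E` with `Ĥ(x,0) = f x` and `p ∘ Ĥ = H`. -/
theorem fiber_bundle_homotopy_lifting_property_cubes
    {E B F : Type*} [TopologicalSpace E] [TopologicalSpace B] [TopologicalSpace F]
    (p : E → B) (hp : Continuous p)
    (htriv : ∀ b : B, ∃ U : Set B, IsOpen U ∧ b ∈ U ∧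
      ∃ h : (p ⁻¹' U) ≃ₜ (U × F), ∀ x : p ⁻¹' U, ((h x).1 : B) = p x)
    (k : ℕ)
    (f : (Fin k → unitInterval) → E) (hf : Continuous f)
    (H : (Fin k → unitInterval) × unitInterval → B) (hH : Continuous H)
    (hH0 : ∀ x : Fin k → unitInterval, H (x, 0) = p (f x)) :
    ∃ Hlift : (Fin k → unitInterval) × unitInterval → E,
      Continuous Hlift ∧
      (∀ x : Fin k → unitInterval, Hlift (x, 0) = f x) ∧
      (∀ (x : Fin k → unitInterval) (t : unitInterval), p (Hlift (x, t)) = H (x, t)) := by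
  classical
  choose U hUo hUmem h hhp using htriv
  haveI : Nonempty E := ⟨f (fun _ => 0)⟩
  haveI : Nonempty F := by
    set b0 := p (f fun _ => 0)
    have hm : f (fun _ => 0) ∈ p ⁻¹' (U b0) := hUmem b0
    exact ⟨((h b0) ⟨_, hm⟩).2⟩
  -- Lebesgue number
  have hcover : (univ : Set ((Fin k → II) × II)) ⊆ ⋃ b, H ⁻¹' (U b) :=
    fun z _ => mem_iUnion.2 ⟨H z, hUmem (H z)⟩
  obtain ⟨δ₀, hδ₀, hball⟩ := lebesgue_number_lemma_of_metric isCompact_univ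
    (fun b => (hUo b).preimage hH) hcover
  obtain ⟨n, hn⟩ := exists_nat_one_div_lt hδ₀
  set N : ℕ := n + 1 with hNdef
  have hN1 : 1 ≤ N := Nat.le_add_left 1 n
  have hNpos : (0:ℝ) < (N:ℝ) := by positivity
  set δg : ℝ := 1 / (N : ℝ) with hδgdef
  have hδg_pos : 0 < δg := by positivity
  have hδg_lt : δg < δ₀ := by
    have : ((N:ℝ)) = (n:ℝ) + 1 := by push_cast [hNdef]; ring
    rw [hδgdef, this]; exact hn
  have hNδg : (N:ℝ) * δg = 1 := by rw [hδgdef]; field_simp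
  -- each small cell is mapped into a trivializing open set
  have hcell : ∀ (a : Fin k → ℕ) (j : ℕ), (∀ i, a i + 1 ≤ N) → j + 1 ≤ N →
      ∃ b, ∀ z ∈ cube (fun i => (a i : ℝ) * δg) ((j:ℝ) * δg) δg, H z ∈ U b := by
    intro a j ha hj
    have hmemx : ∀ i, (a i : ℝ) * δg ∈ Icc (0:ℝ) 1 := by
      intro i
      constructor
      · positivity
      · have h1 : (a i : ℝ) ≤ (N : ℝ) := by exact_mod_cast (Nat.le_of_succ_le_succ
          (Nat.succ_le_succ (Nat.le_of_succ_le (ha i))))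
        calc (a i : ℝ) * δg ≤ (N:ℝ) * δg := mul_le_mul_of_nonneg_right h1 hδg_pos.le
          _ = 1 := hNδg
    have hmemt : (j : ℝ) * δg ∈ Icc (0:ℝ) 1 := by
      constructor
      · positivity
      · have h1 : (j : ℝ) ≤ (N : ℝ) := by exact_mod_cast Nat.le_of_succ_le hj
        calc (j : ℝ) * δg ≤ (N:ℝ) * δg := mul_le_mul_of_nonneg_right h1 hδg_pos.le
          _ = 1 := hNδg
    set w : (Fin k → II) × II := (fun i => ⟨(a i : ℝ) * δg, hmemx i⟩, ⟨(j:ℝ)*δg, hmemt⟩)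
      with hwdef
    obtain ⟨b, hb⟩ := hball w (mem_univ w)
    refine ⟨b, fun z hz => hb ?_⟩
    have h2 : dist z.2 w.2 ≤ δg := by
      rw [Subtype.dist_eq, Real.dist_eq]
      rw [abs_le]
      have hwv : (w.2 : ℝ) = (j:ℝ) * δg := rfl
      have hzl : (j:ℝ) * δg ≤ (z.2 : ℝ) := hz.2.1
      have hzu : (z.2 : ℝ) ≤ (j:ℝ) * δg + δg := hz.2.2
      rw [hwv]
      constructor <;> linarith
    have h1 : dist z.1 w.1 ≤ δg := by
      rw [dist_pi_le_iff hδg_pos.le]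
      intro i
      rw [Subtype.dist_eq, Real.dist_eq, abs_le]
      have hwv : (w.1 i : ℝ) = (a i : ℝ) * δg := rfl
      have hzl : (a i : ℝ) * δg ≤ (z.1 i : ℝ) := (hz.1 i).1
      have hzu : (z.1 i : ℝ) ≤ (a i : ℝ) * δg + δg := (hz.1 i).2
      rw [hwv]
      constructor <;> linarith
    have : dist z w < δ₀ := by
      rw [Prod.dist_eq]
      exact lt_of_le_of_lt (max_le h1 h2) hδg_lt
    exact Metric.mem_ball.2 this
  -- the filled-up slabs
  set Kt : ℕ → Set ((Fin k → II) × II) := fun j => {z | (z.2:ℝ) ≤ (j:ℝ) * δg} with hKtdef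
  have hKt_closed : ∀ j, IsClosed (Kt j) :=
    fun j => isClosed_le continuous_coord2 continuous_const
  have hbot : ∀ (j : ℕ) (x : Fin k → II), ((x, (0:II)) : (Fin k → II) × II) ∈ Kt j := by
    intro j x
    show ((0:II):ℝ) ≤ (j:ℝ) * δg
    rw [Set.Icc.coe_zero]
    positivity
  -- main induction over time steps
  have main : ∀ j, j ≤ N → ∃ g : (Fin k → II) × II → E, ContinuousOn g (Kt j) ∧
      (∀ z ∈ Kt j, p (g z) = H z) ∧ (∀ x, g (x, 0) = f x) := by
    intro j
    induction j with
    | zero =>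
      intro _
      refine ⟨fun z => f z.1, (hf.comp continuous_fst).continuousOn, ?_, fun x => rfl⟩
      intro z hz
      have hz' : (z.2 : ℝ) ≤ 0 := by
        have : (z.2:ℝ) ≤ (0:ℕ) * δg := hz
        simpa using this
      have hz0 : z.2 = 0 := Subtype.ext (le_antisymm hz' z.2.2.1)
      calc p (f z.1) = H (z.1, 0) := (hH0 z.1).symm
        _ = H z := by rw [← hz0]
    | succ j ih =>
      intro hjN
      obtain ⟨g0, hg0c, hg0p, hg0b⟩ := ih (Nat.le_of_succ_le hjN)
      letI : LinearOrder (Lex (Fin k → Fin N)) :=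
        @linearOrderOfSTO _ (· < ·)
          { trichotomous := (Pi.isTrichotomous_lex _ _ IsWellFounded.wf).1 }
          (Classical.decRel _)
      letI : Fintype (Lex (Fin k → Fin N)) := Fintype.ofEquiv _ toLex
      set lfun : Lex (Fin k → Fin N) → Fin k → ℝ := fun a i => ((ofLex a i : ℕ) : ℝ) * δg with hlfundef
      set tj : ℝ := (j:ℝ) * δg with htjdef
      set cell : Lex (Fin k → Fin N) → Set ((Fin k → II) × II) := fun a => cube (lfun a) tj δg with hcelldef
      have hcell_closed : ∀ a, IsClosed (cell a) := fun a => isClosed_cube _ _ _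
      have ht0 : 0 ≤ tj := by positivity
      have ht1 : tj + δg ≤ 1 := by
        have h1 : ((j:ℝ) + 1) ≤ (N : ℝ) := by exact_mod_cast hjN
        have : ((j:ℝ) + 1) * δg ≤ (N:ℝ) * δg := mul_le_mul_of_nonneg_right h1 hδg_pos.le
        rw [hNδg] at this
        calc tj + δg = ((j:ℝ) + 1) * δg := by rw [htjdef]; ring
          _ ≤ 1 := this
      have inner : ∀ (c : ℕ) (s : Finset (Lex (Fin k → Fin N))), s.card = c →
          (∀ a ∈ s, ∀ b : Lex (Fin k → Fin N), b ≤ a → b ∈ s) →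
          ∃ g : (Fin k → II) × II → E,
            ContinuousOn g (Kt j ∪ ⋃ a ∈ s, cell a) ∧
            (∀ z ∈ Kt j ∪ ⋃ a ∈ s, cell a, p (g z) = H z) ∧ (∀ x, g (x, 0) = f x) := by
        intro c
        induction c with
        | zero =>
          intro s hs _
          rw [Finset.card_eq_zero] at hs
          subst hs
          have hempty : (Kt j ∪ ⋃ a ∈ (∅ : Finset (Lex (Fin k → Fin N))), cell a) = Kt j := by simp
          rw [hempty]
          exact ⟨g0, hg0c, hg0p, hg0b⟩
        | succ c ihc =>
          intro s hs hlow
          have hne : s.Nonempty := Finset.card_pos.mp (hs ▸ c.succ_pos)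
          set a := s.max' hne with hadef
          set s' := s.erase a with hs'def
          have hcard' : s'.card = c := by
            rw [hs'def, Finset.card_erase_of_mem (s.max'_mem hne), hs]
            omega
          have hlow' : ∀ x ∈ s', ∀ b : Lex (Fin k → Fin N), b ≤ x → b ∈ s' := by
            intro x hx b hb
            have hxs : x ∈ s := Finset.mem_of_mem_erase hx
            have hbs : b ∈ s := hlow x hxs b hb
            refine Finset.mem_erase.2 ⟨?_, hbs⟩
            intro hba
            have hxa : x ≤ a := Finset.le_max' s x hxs
            have hax : a ≤ x := hba ▸ hb
            have hxeq : x = a := le_antisymm hxa hax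
            rw [hxeq] at hx
            exact Finset.notMem_erase a s hx
          obtain ⟨g1, hg1c, hg1p, hg1b⟩ := ihc s' hcard' hlow'
          have ha_bound : ∀ i, (ofLex a i : ℕ) + 1 ≤ N := fun i => (ofLex a i).2
          obtain ⟨b0, hb0⟩ := hcell (fun i => (ofLex a i : ℕ)) j ha_bound hjN
          set S : Finset (Fin k) := Finset.univ.filter (fun i => (ofLex a i : ℕ) ≠ 0)
            with hSdef
          set K := Kt j ∪ ⋃ b ∈ s', cell b with hKdef
          have hKclosed : IsClosed K :=
            (hKt_closed j).union (isClosed_biUnion_finset fun b _ => hcell_closed b)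
          have hl0 : ∀ i, 0 ≤ lfun a i := by
            intro i; simp only [hlfundef]; positivity
          have hl1 : ∀ i, lfun a i + δg ≤ 1 := by
            intro i
            have h1 : ((ofLex a i : ℕ) : ℝ) + 1 ≤ (N : ℝ) := by exact_mod_cast ha_bound i
            have h2 : (((ofLex a i : ℕ) : ℝ) + 1) * δg ≤ (N:ℝ) * δg :=
              mul_le_mul_of_nonneg_right h1 hδg_pos.le
            rw [hNδg] at h2
            calc lfun a i + δg = (((ofLex a i : ℕ) : ℝ) + 1) * δg := by rw [hlfundef]; ring
              _ ≤ 1 := h2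
          have hKQ : K ∩ cube (lfun a) tj δg ⊆ corner (lfun a) tj δg S := by
            rintro z ⟨hzK, hzQ⟩
            refine ⟨hzQ, ?_⟩
            rcases hzK with hzT | hzU
            · exact Or.inl (le_antisymm hzT hzQ.2.1)
            · rw [mem_iUnion₂] at hzU
              obtain ⟨b, hbs', hzb⟩ := hzU
              have hba : b < a :=
                lt_of_le_of_ne (Finset.le_max' s b (Finset.mem_of_mem_erase hbs'))
                  (Finset.ne_of_mem_erase hbs')
              obtain ⟨i, _, hlt⟩ := hba
              right
              refine ⟨i, Finset.mem_filter.2 ⟨Finset.mem_univ i, ?_⟩, ?_⟩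
              · intro h0
                have hlt' : (ofLex b i : ℕ) < (ofLex a i : ℕ) := hlt
                omega
              · have h1 : (z.1 i : ℝ) ≤ ((ofLex b i : ℕ) : ℝ) * δg + δg := (hzb.1 i).2
                have h2 : ((ofLex a i : ℕ) : ℝ) * δg ≤ (z.1 i : ℝ) := (hzQ.1 i).1
                have h3 : (ofLex b i : ℕ) + 1 ≤ (ofLex a i : ℕ) := hlt
                have h3' : ((ofLex b i : ℕ) : ℝ) + 1 ≤ ((ofLex a i : ℕ) : ℝ) := by
                  exact_mod_cast h3
                have h4 : (((ofLex b i : ℕ) : ℝ) + 1) * δg ≤ ((ofLex a i : ℕ) : ℝ) * δg :=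
                  mul_le_mul_of_nonneg_right h3' hδg_pos.le
                have h5 : (z.1 i : ℝ) ≤ ((ofLex a i : ℕ) : ℝ) * δg := by nlinarith
                exact le_antisymm h5 h2
          have hcK : corner (lfun a) tj δg S ⊆ K := by
            rintro z ⟨hzQ, hcond⟩
            rcases hcond with ht | ⟨i, hiS, hxi⟩
            · exact Or.inl (le_of_eq ht)
            · right
              have hane : (ofLex a i : ℕ) ≠ 0 := (Finset.mem_filter.mp hiS).2
              have hlt' : (ofLex a i : ℕ) - 1 < N :=
                lt_of_le_of_lt (Nat.sub_le _ _) (ofLex a i).2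
              set b : Lex (Fin k → Fin N) := toLex (Function.update (ofLex a) i ⟨(ofLex a i : ℕ) - 1, hlt'⟩)
                with hbdef
              have hobi : ofLex b i = (⟨(ofLex a i : ℕ) - 1, hlt'⟩ : Fin N) := by
                rw [hbdef]; exact Function.update_self i _ _
              have hobj : ∀ i', i' ≠ i → ofLex b i' = ofLex a i' := by
                intro i' hi'
                rw [hbdef]; exact Function.update_of_ne hi' _ _
              have hblt : b < a := by
                refine ⟨i, fun j' hj' => hobj j' (ne_of_lt hj'), ?_⟩
                show (ofLex b i : Fin N) < ofLex a i
                rw [hobi]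
                exact Fin.mk_lt_mk.2 (Nat.sub_lt (Nat.pos_of_ne_zero hane) one_pos)
              have hbne : b ≠ a := ne_of_lt hblt
              have hbs' : b ∈ s' :=
                Finset.mem_erase.2 ⟨hbne, hlow a (s.max'_mem hne) b hblt.le⟩
              rw [mem_iUnion₂]
              refine ⟨b, hbs', ⟨fun i' => ?_, hzQ.2.1, hzQ.2.2⟩⟩
              by_cases hii : i' = i
              · subst hii
                have h1le : 1 ≤ (ofLex a i' : ℕ) := Nat.pos_of_ne_zero hane
                have hv : ((ofLex b i' : ℕ) : ℝ) = ((ofLex a i' : ℕ) : ℝ) - 1 := by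
                  rw [hobi]
                  show (((ofLex a i' : ℕ) - 1 : ℕ) : ℝ) = ((ofLex a i' : ℕ) : ℝ) - 1
                  rw [Nat.cast_sub h1le, Nat.cast_one]
                simp only [hlfundef] at hxi ⊢
                rw [hv, hxi]
                constructor <;> nlinarith [hδg_pos]
              · simp only [hlfundef]
                rw [hobj i' hii]
                have := hzQ.1 i'
                simp only [hlfundef] at this
                exact this
          obtain ⟨g', hg'c, hg'p, hg'ext⟩ := ext_lemma p H hH (U b0) (h b0) (hhp b0)
            (lfun a) tj δg hδg_pos hl0 hl1 ht0 ht1 S K hKclosed hKQ hcK hb0 g1 hg1c hg1p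
          have hset : (Kt j ∪ ⋃ b ∈ s, cell b) ⊆ K ∪ cube (lfun a) tj δg := by
            rintro z (hzT | hzU)
            · exact Or.inl (Or.inl hzT)
            · rw [mem_iUnion₂] at hzU
              obtain ⟨b, hbs, hzb⟩ := hzU
              by_cases hbeq : b = a
              · subst hbeq
                exact Or.inr hzb
              · refine Or.inl (Or.inr ?_)
                rw [mem_iUnion₂]
                exact ⟨b, Finset.mem_erase.2 ⟨hbeq, hbs⟩, hzb⟩
          refine ⟨g', hg'c.mono hset, fun z hz => hg'p z (hset hz), fun x => ?_⟩
          rw [hg'ext _ (Or.inl (hbot j x))]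
          exact hg1b x
      obtain ⟨g, hgc, hgp, hgb⟩ := inner Finset.univ.card Finset.univ rfl
        (fun a _ b _ => Finset.mem_univ b)
      have hsub : Kt (j+1) ⊆ Kt j ∪ ⋃ a ∈ (Finset.univ : Finset (Lex (Fin k → Fin N))), cell a := by
        intro z hz
        by_cases hzj : (z.2:ℝ) ≤ (j:ℝ)*δg
        · exact Or.inl hzj
        · right
          push_neg at hzj
          have hNpos' : 0 < N := hN1
          set av : Fin k → Fin N := fun i =>
            ⟨min (N-1) (Nat.floor ((z.1 i : ℝ) * N)),
              lt_of_le_of_lt (min_le_left _ _) (Nat.sub_lt hNpos' one_pos)⟩ with havdef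
          rw [mem_iUnion₂]
          refine ⟨toLex av, Finset.mem_univ _, ⟨fun i => ?_, le_of_lt hzj, ?_⟩⟩
          · have hofLex : ofLex (toLex av) i = av i := rfl
            have hnn : 0 ≤ (z.1 i : ℝ) * N := mul_nonneg (z.1 i).2.1 (Nat.cast_nonneg N)
            set cc := Nat.floor ((z.1 i : ℝ) * N) with hccdef
            have hfl : (cc:ℝ) ≤ (z.1 i:ℝ) * N := Nat.floor_le hnn
            have hfu : (z.1 i:ℝ) * N < (cc:ℝ) + 1 := Nat.lt_floor_add_one _
            simp only [hlfundef, hofLex, havdef]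
            show ((min (N-1) cc : ℕ) : ℝ) * δg ≤ (z.1 i : ℝ) ∧ (z.1 i : ℝ) ≤ ((min (N-1) cc : ℕ) : ℝ) * δg + δg
            have h6 : (z.1 i : ℝ) * ↑N * δg = (z.1 i : ℝ) := by
              rw [mul_assoc, hNδg, mul_one]
            by_cases hc : cc ≤ N - 1
            · rw [min_eq_right hc]
              constructor
              · have h5 := mul_le_mul_of_nonneg_right hfl hδg_pos.le
                nlinarith
              · have h5 := mul_le_mul_of_nonneg_right hfu.le hδg_pos.le
                nlinarith
            · have hNle : N ≤ cc := by omega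
              have hx1 : (z.1 i : ℝ) = 1 := by
                have hge : (N:ℝ) ≤ (z.1 i:ℝ) * N := le_trans (by exact_mod_cast hNle) hfl
                have h7 : 1 ≤ (z.1 i : ℝ) := by nlinarith
                exact le_antisymm (z.1 i).2.2 h7
              rw [min_eq_left (le_of_not_ge hc)]
              have hcast : (((N:ℕ) - 1 : ℕ) : ℝ) = (N:ℝ) - 1 := by
                push_cast [Nat.cast_sub hN1]; ring
              rw [hcast, hx1]
              constructor
              · nlinarith [hNδg, hδg_pos]
              · nlinarith [hNδg, hδg_pos]
          · have : ((j:ℝ)+1) * δg = tj + δg := by rw [htjdef]; ring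
            have hz' : (z.2:ℝ) ≤ ((j:ℝ)+1) * δg := by
              have := hz
              rw [hKtdef] at this
              simp only [mem_setOf_eq] at this
              push_cast at this
              linarith
            rw [this] at hz'
            exact hz'
      exact ⟨g, hgc.mono hsub, fun z hz => hgp z (hsub hz), hgb⟩
  obtain ⟨g, hgc, hgp, hgb⟩ := main N le_rfl
  have huniv : ∀ z : (Fin k → II) × II, z ∈ Kt N := by
    intro z
    show (z.2:ℝ) ≤ (N:ℝ) * δg
    rw [hNδg]
    exact z.2.2.2
  refine ⟨g, ?_, hgb, fun x t => hgp (x,t) (huniv (x,t))⟩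
  rw [← continuousOn_univ]
  exact hgc.mono (fun z _ => huniv z)
end
end

section
/- Let p : E → B be a continuous map of topological spaces carrying the structure of a fiber bundle with fiber F, let b₀ ∈ B and x₀ ∈ p⁻¹(b₀). If the fiber p⁻¹(b₀) (with the subspace topology) is path-connected, then the induced homomorphism of fundamental groups p_* : π₁(E, x₀) → π₁(B, b₀) is surjective. -/
open CategoryTheory

attribute [local instance] Path.Homotopic.setoid

private lemma truncate_apply' {X : Type} [TopologicalSpace X] {c c' : X} (γ : Path c c')
    (t₀ t₁ : ℝ) (s : unitInterval) :
    γ.truncate t₀ t₁ s = γ.extend (min (max s t₀) t₁) := rfl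

private lemma cast_trans' {X : Type} [TopologicalSpace X] {a b c a' b' c' : X}
    (γ₁ : Path a b) (γ₂ : Path b c) (ha : a' = a) (hb : b' = b) (hc : c' = c) :
    (γ₁.cast ha hb).trans (γ₂.cast hb hc) = (γ₁.trans γ₂).cast ha hc := by
  subst ha; subst hb; subst hc; rfl

private lemma homotopic_cast' {X : Type} [TopologicalSpace X] {x y x' y' : X}
    (hx : x' = x) (hy : y' = y) {q₁ q₂ : Path x y} (h : q₁.Homotopic q₂) :
    (q₁.cast hx hy).Homotopic (q₂.cast hx hy) := by
  subst hx; subst hy; exact h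

/-- Splitting a truncated path at an intermediate time, up to homotopy. -/
private lemma trunc_split' {X : Type} [TopologicalSpace X] {c c' : X} (γ : Path c c')
    {a b : ℝ} (h0 : 0 ≤ a) (hab : a ≤ b) (hb1 : b ≤ 1) :
    Path.Homotopic ((γ.truncateOfLE h0).trans (γ.truncateOfLE hab))
      (γ.truncateOfLE (h0.trans hab)) := by
  have ha1 : a ≤ 1 := hab.trans hb1
  have hmem : ∀ s : unitInterval, max (min (2 * (s : ℝ)) a) (2 * (s : ℝ) - 1) ∈ unitInterval := by
    intro s
    constructor
    · exact le_max_of_le_left (le_min (by nlinarith [s.2.1]) h0)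
    · exact max_le ((min_le_right _ _).trans ha1) (by linarith [s.2.2])
  set f : unitInterval → unitInterval :=
    fun s => ⟨max (min (2 * (s : ℝ)) a) (2 * (s : ℝ) - 1), hmem s⟩ with hfdef
  have hfc : Continuous f := by
    apply Continuous.subtype_mk
    fun_prop
  have hf0 : f 0 = 0 := by
    apply Subtype.ext
    show max (min (2 * (0 : ℝ)) a) (2 * (0 : ℝ) - 1) = 0
    rw [mul_zero, min_eq_left h0]
    norm_num
  have hf1 : f 1 = 1 := by
    apply Subtype.ext
    show max (min (2 * (1 : ℝ)) a) (2 * (1 : ℝ) - 1) = 1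
    rw [mul_one, min_eq_right (by linarith : a ≤ 2)]
    norm_num [ha1]
  have key : (γ.truncateOfLE (h0.trans hab)).reparam f hfc hf0 hf1 =
      (γ.truncateOfLE h0).trans (γ.truncateOfLE hab) := by
    ext s
    rw [Path.trans_apply]
    simp only [Path.coe_reparam, Function.comp_apply, Path.truncateOfLE, Path.cast_coe]
    rw [truncate_apply']
    have hs0 : (0 : ℝ) ≤ s := s.2.1
    have hs1 : (s : ℝ) ≤ 1 := s.2.2
    split_ifs with h
    · rw [truncate_apply']
      have harith : min (max (max (min (2 * (s : ℝ)) a) (2 * (s : ℝ) - 1)) 0) b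
          = min (max (2 * (s : ℝ)) 0) a := by
        simp only [min_def, max_def]
        split_ifs <;> linarith
      rw [harith]
    · rw [truncate_apply']
      have harith : min (max (max (min (2 * (s : ℝ)) a) (2 * (s : ℝ) - 1)) 0) b
          = min (max (2 * (s : ℝ) - 1) a) b := by
        simp only [min_def, max_def]
        split_ifs <;> linarith
      rw [harith]
  exact Path.Homotopic.symm (key ▸ ⟨Path.Homotopy.reparam _ f hfc hf0 hf1⟩)

/-- Exact path lifting over a trivializing neighborhood. -/
private lemma piece_lift' {E B F : Type} [TopologicalSpace E] [TopologicalSpace B]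
    [TopologicalSpace F] (p : C(E, B)) {U : Set B} (h : (p ⁻¹' U) ≃ₜ (U × F))
    (hcompat : ∀ x : p ⁻¹' U, ((h x).1 : B) = p x)
    {c c' : B} (σ : Path c c') (hσ : ∀ t, σ t ∈ U)
    (x : E) (hx : p x = c) :
    ∃ (x' : E) (_ : p x' = c') (Γ : Path x x'), ∀ t, p (Γ t) = σ t := by
  have hx0 : x ∈ p ⁻¹' U := by
    have h1 : σ 0 ∈ U := hσ 0
    rw [σ.source] at h1
    show p x ∈ U
    rw [hx]; exact h1
  set fc : F := (h ⟨x, hx0⟩).2 with hfc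
  set L : unitInterval → E := fun t => ((h.symm (⟨σ t, hσ t⟩, fc) : p ⁻¹' U) : E) with hL
  have hLc : Continuous L := by
    apply continuous_subtype_val.comp
    apply h.symm.continuous.comp
    exact (Continuous.subtype_mk σ.continuous _).prodMk continuous_const
  have hpL : ∀ t, p (L t) = σ t := by
    intro t
    have h1 := hcompat (h.symm (⟨σ t, hσ t⟩, fc))
    rw [h.apply_symm_apply] at h1
    exact h1.symm
  have hL0 : L 0 = x := by
    have h2 : ((⟨σ 0, hσ 0⟩, fc) : U × F) = h ⟨x, hx0⟩ := by
      refine Prod.ext ?_ rfl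
      apply Subtype.ext
      show (σ 0 : B) = ((h ⟨x, hx0⟩).1 : B)
      rw [hcompat ⟨x, hx0⟩, hx, σ.source]
    show ((h.symm (⟨σ 0, hσ 0⟩, fc) : p ⁻¹' U) : E) = x
    rw [h2, h.symm_apply_apply]
  refine ⟨L 1, by rw [hpL 1, σ.target], ⟨⟨L, hLc⟩, hL0, rfl⟩, fun t => hpL t⟩

/-- The homomorphism of fundamental groups induced by a continuous map `f`, with basepoint `x`
mapped to `f x`. -/
noncomputable def inducedFundamentalGroupHom {X Y : Type} [TopologicalSpace X]
    [TopologicalSpace Y] (f : C(X, Y)) (x : X) :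
    FundamentalGroup X x →* FundamentalGroup Y (f x) :=
  CategoryTheory.Functor.mapEnd (FundamentalGroupoid.mk x)
    (FundamentalGroupoid.fundamentalGroupoidFunctor.map (X := TopCat.of X) (Y := TopCat.of Y) (TopCat.ofHom f))

/-- **Surjectivity of `p₊ : π₁(E) → π₁(B)` for a fiber bundle with path-connected fiber.**
Let `p : E → B` be a continuous map that is a fiber bundle with fiber `F` (every point of `B` has
an open neighborhood over which `p` is trivial), let `b₀ ∈ B` and `x₀ ∈ p⁻¹(b₀)`.  If the fiber
`p⁻¹(b₀)` (with the subspace topology) is path-connected, then the induced homomorphism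
`p₊ : π₁(E, x₀) → π₁(B, b₀)` is surjective. -/
theorem fiber_bundle_pi1_map_surjective_of_pathConnected_fiber
    {E B F : Type} [TopologicalSpace E] [TopologicalSpace B] [TopologicalSpace F]
    (p : C(E, B)) (hsurj : Function.Surjective p)
    (htriv : ∀ b : B, ∃ U : Set B, IsOpen U ∧ b ∈ U ∧
      ∃ h : (p ⁻¹' U) ≃ₜ (U × F), ∀ x : p ⁻¹' U, ((h x).1 : B) = p x)
    (b₀ : B) (x₀ : p ⁻¹' {b₀})
    (hfiber : IsPathConnected (p ⁻¹' {b₀})) :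
    Function.Surjective (inducedFundamentalGroupHom p (x₀ : E)) := by
  set e : E := (x₀ : E) with he
  intro g
  have hpe : p e = b₀ := x₀.2
  -- a representative loop of `g`
  obtain ⟨γ, hγ⟩ := Quotient.exists_rep (show Path.Homotopic.Quotient (p e) (p e) from g)
  -- choose trivializations
  choose U hUopen hUmem h hcompat using htriv
  -- Lebesgue number for the cover of I by preimages of trivializing opens
  obtain ⟨δ, hδpos, hball⟩ := lebesgue_number_lemma_of_metric (isCompact_univ (X := unitInterval))
    (fun b => (hUopen b).preimage γ.continuous)
    (fun t _ => Set.mem_iUnion.2 ⟨γ t, hUmem (γ t)⟩)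
  obtain ⟨n, hn⟩ := exists_nat_one_div_lt hδpos
  set N : ℕ := n + 1 with hN
  have hNpos : (0 : ℝ) < N := by positivity
  have hNδ : (1 : ℝ) / N < δ := by
    rw [hN]; exact_mod_cast hn
  have hpe0 : p e = γ.extend 0 := by rw [γ.extend_zero]
  -- inductive lifting along the subdivision
  have main : ∀ k : ℕ, k ≤ N → ∃ (x' : E) (hx' : p x' = γ.extend ((k : ℝ) / N))
      (Γ : Path e x'),
      Path.Homotopic (Γ.map p.continuous)
        ((γ.truncateOfLE (by positivity : (0:ℝ) ≤ (k : ℝ) / N)).cast hpe0 hx') := by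
    intro k
    induction k with
    | zero =>
      intro _
      have hx'0 : p e = γ.extend (((0:ℕ) : ℝ) / N) := by
        rw [Nat.cast_zero, zero_div]; exact hpe0
      refine ⟨e, hx'0, Path.refl e, ?_⟩
      have h00 : (0:ℝ) ≤ ((0:ℕ) : ℝ) / N := by positivity
      have heq : ((γ.truncateOfLE h00).cast hpe0 hx'0) = (Path.refl e).map p.continuous := by
        ext s
        simp only [Path.cast_coe, Path.truncateOfLE, Path.map_coe, Function.comp_apply,
          Path.refl_apply]
        rw [truncate_apply']
        have h1 : min (max (s:ℝ) 0) (((0:ℕ):ℝ)/N) = 0 := by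
          rw [Nat.cast_zero, zero_div, max_eq_left s.2.1, min_eq_right s.2.1]
        rw [h1, ← hpe0]
      have hres : Path.Homotopic ((Path.refl e).map p.continuous)
          ((γ.truncateOfLE h00).cast hpe0 hx'0) := by
        rw [heq]
      exact hres
    | succ k ih =>
      intro hk
      obtain ⟨x₁, hx₁, Γ₁, hΓ₁⟩ := ih (by omega)
      have hk1N : (k : ℝ) + 1 ≤ (N : ℝ) := by exact_mod_cast hk
      have htk0 : (0:ℝ) ≤ (k : ℝ) / N := by positivity
      have htk : (k : ℝ) / N ≤ ((k+1 : ℕ) : ℝ) / N := by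
        push_cast; gcongr; linarith
      have htk1 : ((k+1 : ℕ) : ℝ) / N ≤ 1 := by
        rw [div_le_one hNpos]; exact_mod_cast hk
      set piece := γ.truncateOfLE htk with hpiece
      -- find a trivializing set containing the k-th piece
      obtain ⟨b, hb⟩ := hball ⟨(k : ℝ)/N, ⟨htk0, htk.trans htk1⟩⟩ (Set.mem_univ _)
      have hσ : ∀ t, piece t ∈ U b := by
        intro t
        have hs0 : (0:ℝ) ≤ t := t.2.1
        have hs1 : (t:ℝ) ≤ 1 := t.2.2
        have hpt : piece t = γ.extend (min (max (t:ℝ) ((k:ℝ)/N)) (((k+1:ℕ):ℝ)/N)) := rfl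
        set u : ℝ := min (max (t:ℝ) ((k:ℝ)/N)) (((k+1:ℕ):ℝ)/N) with hu
        have hu1 : (k:ℝ)/N ≤ u := le_min (le_max_right _ _) htk
        have hu2 : u ≤ ((k+1:ℕ):ℝ)/N := min_le_right _ _
        have huI : u ∈ Set.Icc (0:ℝ) 1 := ⟨htk0.trans hu1, hu2.trans htk1⟩
        have hext : γ.extend u = γ ⟨u, huI⟩ := γ.extend_apply huI
        have hmemball : (⟨u, huI⟩ : unitInterval) ∈
            Metric.ball (⟨(k:ℝ)/N, ⟨htk0, htk.trans htk1⟩⟩ : unitInterval) δ := by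
          rw [Metric.mem_ball, Subtype.dist_eq, Real.dist_eq, abs_of_nonneg (by linarith)]
          have hd : ((k+1:ℕ):ℝ)/N - (k:ℝ)/N = 1/N := by push_cast; ring
          linarith
        rw [hpt, hext]
        exact hb hmemball
      obtain ⟨x₂, hx₂, Γ₂, hΓ₂⟩ := piece_lift' p (h b) (hcompat b) piece hσ x₁ (by exact hx₁)
      refine ⟨x₂, hx₂, Γ₁.trans Γ₂, ?_⟩
      rw [Path.map_trans]
      have hΓ₂eq : Γ₂.map p.continuous = piece.cast hx₁ hx₂ := by
        ext t
        simp only [Path.map_coe, Function.comp_apply, Path.cast_coe]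
        exact hΓ₂ t
      rw [hΓ₂eq]
      have h1 : Path.Homotopic ((Γ₁.map p.continuous).trans (piece.cast hx₁ hx₂))
          (((γ.truncateOfLE htk0).cast hpe0 hx₁).trans (piece.cast hx₁ hx₂)) :=
        Path.Homotopic.hcomp hΓ₁ (Path.Homotopic.refl _)
      refine h1.trans ?_
      rw [hpiece, cast_trans']
      exact homotopic_cast' _ _ (trunc_split' γ htk0 htk htk1)
  -- assemble the loop
  obtain ⟨x', hx', Γ, hΓ⟩ := main N le_rfl
  have hNN : ((N:ℕ):ℝ)/N = 1 := div_self (ne_of_gt hNpos)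
  have hx'e : p x' = p e := by rw [hx', hNN, γ.extend_one]
  have hx'f : x' ∈ p ⁻¹' {b₀} := by
    show p x' ∈ ({b₀} : Set B)
    rw [hx'e, hpe]; rfl
  have hef : e ∈ p ⁻¹' {b₀} := x₀.2
  have hjoin : JoinedIn (p ⁻¹' {b₀}) x' e := hfiber.joinedIn x' hx'f e hef
  set δp : Path x' e := hjoin.somePath with hδp
  set L : Path e e := Γ.trans δp with hLdef
  -- the image of the lifted loop is homotopic to γ
  set γ' : Path (p e) (p e) := γ.cast rfl rfl with hγ'
  have hγγ' : γ' = γ := by ext t; rfl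
  have hA : Path.Homotopic (Γ.map p.continuous) (γ.cast rfl hx'e) := by
    have h0NN : (0:ℝ) ≤ ((N:ℕ):ℝ)/N := by positivity
    have heq : ((γ.truncateOfLE h0NN).cast hpe0 hx') = γ.cast rfl hx'e := by
      ext t
      simp only [Path.cast_coe, Path.truncateOfLE]
      rw [truncate_apply']
      have h1 : min (max (t:ℝ) 0) (((N:ℕ):ℝ)/N) = (t:ℝ) := by
        rw [hNN, max_eq_left t.2.1, min_eq_left t.2.2]
      rw [h1]
      exact γ.extend_extends' t
    exact heq ▸ hΓ
  have hC : δp.map p.continuous = (Path.refl (p e)).cast hx'e rfl := by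
    ext t
    simp only [Path.map_coe, Function.comp_apply, Path.cast_coe, Path.refl_apply]
    have := hjoin.somePath_mem t
    have h2 : p (δp t) = b₀ := this
    rw [h2, hpe]
  have hhom : Path.Homotopic (L.map p.continuous) γ' := by
    rw [hLdef, Path.map_trans, hC]
    have h1 : Path.Homotopic ((Γ.map p.continuous).trans ((Path.refl (p e)).cast hx'e rfl))
        ((γ.cast rfl hx'e).trans ((Path.refl (p e)).cast hx'e rfl)) :=
      Path.Homotopic.hcomp hA (Path.Homotopic.refl _)
    refine h1.trans ?_
    have heq2 : (γ.cast rfl hx'e).trans ((Path.refl (p e)).cast hx'e rfl)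
        = γ'.trans (Path.refl (p e)) := by
      ext t
      rw [Path.trans_apply, Path.trans_apply]
      split_ifs <;> simp [Path.cast_coe, hγ']
    rw [heq2]
    exact ⟨Path.Homotopy.transRefl γ'⟩
  have hhomγ : Path.Homotopic (L.map p.continuous) γ := hγγ' ▸ hhom
  refine ⟨FundamentalGroup.fromPath (X := TopCat.of E) ⟦L⟧, ?_⟩
  show (FundamentalGroupoid.fundamentalGroupoidFunctor.map
      (X := TopCat.of E) (Y := TopCat.of B) (TopCat.ofHom p)).map
      (X := FundamentalGroupoid.mk e) (Y := FundamentalGroupoid.mk e) ⟦L⟧ = g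
  have hγ2 : (⟦γ⟧ : Path.Homotopic.Quotient (p e) (p e)) = g := hγ
  rw [← hγ2]
  exact Quotient.sound hhomγ
end
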